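/- Let (A_1, B_1), …, (A_N, B_N) be pairs of real numbers with 0 ≤ A_i ≤ C and 0 ≤ B_i ≤ C, C > 0, whose population parameters μ_A, μ_B, ν_A, ν_B, ν_{A,B} satisfy ν_A − μ_A² > 0 and ν_B − μ_B² > 0, and let ρ = (ν_{A,B} − μ_A·μ_B) / (√(ν_A − μ_A²)·√(ν_B − μ_B²)) be the population Pearson correlation. Sample n pairs uniformly at random without replacement, let μ_a, μ_b, ν_a, ν_b, ν_{a,b} be the sample analogues, let 0 < α < 1, t = √( ln(10/α)·C²/(2n) ), t' = √( ln(10/α)·C⁴/(2n) ), and define the (random) bounds μ_A^low = max(0, μ_a − t), μ_A^high = μ_a + t, μ_B^low = max(0, μ_b − t), μ_B^high = μ_b + t, ν_A^low = ν_a − t', ν_A^high = ν_a + t', ν_B^low = ν_b − t', ν_B^high = ν_b + t', ν_{A,B}^low = ν_{a,b} − t', ν_{A,B}^high = ν_{a,b} + t'. Define num_low, num_high, den_low, den_high, ρ^low, ρ^high from these bounds as in the paper's case analysis (num_low = ν_{A,B}^low − μ_A^high·μ_B^high, num_high = ν_{A,B}^high − μ_A^low·μ_B^low; den_low and den_high as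 the square roots of the products of the clamped variance bounds; ρ^low = num_low/den_high if num_low ≥ 0 else num_low/den_low; ρ^high = num_high/den_low if num_high ≥ 0 else num_high/den_high). Then with probability at least 1 − α, the implication holds: if den_low > 0 then ρ^low ≤ ρ ≤ ρ^high. -/

import Mathlib

open scoped Classical

section Auxiliary


/-- Hoeffding's analytic lemma (Bernoulli form, nonnegative argument). -/
lemma bernoulli_mgf_bound (p u : ℝ) (hp0 : 0 ≤ p) (hp1 : p ≤ 1) (hu : 0 ≤ u) :
    1 - p + p * Real.exp u ≤ Real.exp (p * u + u ^ 2 / 8) := by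
  have hD : ∀ v : ℝ, 0 ≤ v → (1:ℝ) ≤ 1 - p + p * Real.exp v := by
    intro v hv
    nlinarith [Real.one_le_exp hv, Real.exp_pos v]
  set g : ℝ → ℝ := fun v => p * v + v ^ 2 / 8 - Real.log (1 - p + p * Real.exp v) with hg
  set g1 : ℝ → ℝ := fun v => p + v / 4 - p * Real.exp v / (1 - p + p * Real.exp v) with hg1
  have hDer : ∀ v : ℝ, 0 ≤ v → HasDerivAt g (g1 v) v := by
    intro v hv
    have hDpos : (0:ℝ) < 1 - p + p * Real.exp v := lt_of_lt_of_le one_pos (hD v hv)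
    have h1 : HasDerivAt (fun v : ℝ => 1 - p + p * Real.exp v) (p * Real.exp v) v := by
      simpa using ((Real.hasDerivAt_exp v).const_mul p).const_add (1 - p)
    have h2 : HasDerivAt (fun v : ℝ => Real.log (1 - p + p * Real.exp v))
        (p * Real.exp v / (1 - p + p * Real.exp v)) v := h1.log (ne_of_gt hDpos)
    have h4 : HasDerivAt (fun v : ℝ => p * v) p v := by
      simpa using (hasDerivAt_id v).const_mul p
    have h5 : HasDerivAt (fun v : ℝ => v ^ 2 / 8) (v / 4) v := by
      have := (hasDerivAt_pow 2 v).div_const 8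
      exact this.congr_deriv (by ring)
    exact (h4.add h5).sub h2
  have hDer1 : ∀ v : ℝ, 0 ≤ v → HasDerivAt g1
      (1 / 4 - (1 - p) * (p * Real.exp v) / (1 - p + p * Real.exp v) ^ 2) v := by
    intro v hv
    have hDpos : (0:ℝ) < 1 - p + p * Real.exp v := lt_of_lt_of_le one_pos (hD v hv)
    have h1 : HasDerivAt (fun v : ℝ => 1 - p + p * Real.exp v) (p * Real.exp v) v := by
      simpa using ((Real.hasDerivAt_exp v).const_mul p).const_add (1 - p)
    have h0 : HasDerivAt (fun v : ℝ => p * Real.exp v) (p * Real.exp v) v :=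
      (Real.hasDerivAt_exp v).const_mul p
    have h2 : HasDerivAt (fun v : ℝ => p * Real.exp v / (1 - p + p * Real.exp v))
        ((p * Real.exp v * (1 - p + p * Real.exp v) - p * Real.exp v * (p * Real.exp v)) /
          (1 - p + p * Real.exp v) ^ 2) v := h0.div h1 (ne_of_gt hDpos)
    have h4 : HasDerivAt (fun v : ℝ => p + v / 4) (1 / 4) v := by
      simpa using ((hasDerivAt_id v).div_const 4).const_add p
    have := h4.sub h2
    exact this.congr_deriv (by ring)
  have hg1nonneg : ∀ v : ℝ, 0 ≤ v → 0 ≤ g1 v := by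
    intro v hv
    have key : ∀ w : ℝ, 0 ≤ w →
        0 ≤ 1 / 4 - (1 - p) * (p * Real.exp w) / (1 - p + p * Real.exp w) ^ 2 := by
      intro w hw
      have hDpos : (0:ℝ) < 1 - p + p * Real.exp w := lt_of_lt_of_le one_pos (hD w hw)
      rw [sub_nonneg, div_le_iff₀ (by positivity)]
      nlinarith [sq_nonneg ((1 - p) - p * Real.exp w)]
    have hmono : MonotoneOn g1 (Set.Ici (0:ℝ)) := by
      apply monotoneOn_of_deriv_nonneg (convex_Ici 0)
      · exact fun w hw => (hDer1 w hw).continuousAt.continuousWithinAt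
      · intro w hw
        rw [interior_Ici] at hw
        exact (hDer1 w (le_of_lt hw)).differentiableAt.differentiableWithinAt
      · intro w hw
        rw [interior_Ici] at hw
        rw [(hDer1 w (le_of_lt hw)).deriv]
        exact key w (le_of_lt hw)
    have h0 : g1 0 = 0 := by simp [hg1]
    have := hmono (Set.self_mem_Ici) (Set.mem_Ici.2 hv) hv
    rw [h0] at this
    exact this
  have hgmono : MonotoneOn g (Set.Ici (0:ℝ)) := by
    apply monotoneOn_of_deriv_nonneg (convex_Ici 0)
    · exact fun w hw => (hDer w hw).continuousAt.continuousWithinAt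
    · intro w hw
      rw [interior_Ici] at hw
      exact (hDer w (le_of_lt hw)).differentiableAt.differentiableWithinAt
    · intro w hw
      rw [interior_Ici] at hw
      rw [(hDer w (le_of_lt hw)).deriv]
      exact hg1nonneg w (le_of_lt hw)
  have hg0 : g 0 = 0 := by simp [hg]
  have hgu : 0 ≤ g u := by
    have := hgmono Set.self_mem_Ici (Set.mem_Ici.2 hu) hu
    rw [hg0] at this; exact this
  have hDpos : (0:ℝ) < 1 - p + p * Real.exp u := lt_of_lt_of_le one_pos (hD u hu)
  have : Real.log (1 - p + p * Real.exp u) ≤ p * u + u ^ 2 / 8 := by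
    have h2 : (0:ℝ) ≤ p * u + u ^ 2 / 8 - Real.log (1 - p + p * Real.exp u) := hgu
    linarith
  calc 1 - p + p * Real.exp u = Real.exp (Real.log (1 - p + p * Real.exp u)) :=
        (Real.exp_log hDpos).symm
    _ ≤ Real.exp (p * u + u ^ 2 / 8) := Real.exp_le_exp.2 this


variable {ι : Type*} [DecidableEq ι] [Fintype ι]

/-- Re-indexing a double sum over (set of size k+1, element of it) as
(set of size k, element outside it). -/
lemma sum_powersetCard_succ_erase (s : Finset ι) (k : ℕ) (F : Finset ι → ι → ℝ) :
    ∑ I ∈ s.powersetCard (k+1), ∑ i ∈ I, F (I.erase i) i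
      = ∑ K ∈ s.powersetCard k, ∑ i ∈ s \ K, F K i := by
  rw [Finset.sum_sigma', Finset.sum_sigma']
  apply Finset.sum_nbij' (fun x => (⟨x.1.erase x.2, x.2⟩ : Σ _ : Finset ι, ι))
    (fun x => (⟨insert x.2 x.1, x.2⟩ : Σ _ : Finset ι, ι))
  · rintro ⟨I, i⟩ hx
    rw [Finset.mem_sigma] at hx
    obtain ⟨hI, hi⟩ := hx
    rw [Finset.mem_powersetCard] at hI
    rw [Finset.mem_sigma, Finset.mem_powersetCard]
    refine ⟨⟨(Finset.erase_subset _ _).trans hI.1, ?_⟩, ?_⟩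
    · rw [Finset.card_erase_of_mem hi, hI.2]
      rfl
    · exact Finset.mem_sdiff.2 ⟨hI.1 hi, Finset.notMem_erase _ _⟩
  · rintro ⟨K, i⟩ hx
    rw [Finset.mem_sigma] at hx
    obtain ⟨hK, hi⟩ := hx
    rw [Finset.mem_powersetCard] at hK
    rw [Finset.mem_sdiff] at hi
    rw [Finset.mem_sigma, Finset.mem_powersetCard]
    refine ⟨⟨Finset.insert_subset hi.1 hK.1, ?_⟩, Finset.mem_insert_self _ _⟩
    rw [Finset.card_insert_of_notMem hi.2, hK.2]
  · rintro ⟨I, i⟩ hx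
    rw [Finset.mem_sigma] at hx
    simp [Finset.insert_erase hx.2]
  · rintro ⟨K, i⟩ hx
    rw [Finset.mem_sigma] at hx
    have := (Finset.mem_sdiff.1 hx.2).2
    simp [Finset.erase_insert this]
  · rintro ⟨I, i⟩ _
    rfl

/-- Elementary symmetric sum. -/
noncomputable def esum (z : ι → ℝ) (k : ℕ) : ℝ :=
  ∑ I ∈ (Finset.univ : Finset ι).powersetCard k, ∏ i ∈ I, z i

lemma claim1 (z : ι → ℝ) (hz : ∀ i, 0 ≤ z i) (k : ℕ) :
    (k : ℝ) * ∑ I ∈ (Finset.univ : Finset ι).powersetCard k,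
        (∑ i ∈ Finset.univ \ I, z i) * ∏ i ∈ I, z i
      ≤ ((Fintype.card ι : ℝ) - k) *
        ∑ I ∈ (Finset.univ : Finset ι).powersetCard k,
          (∑ i ∈ I, z i) * ∏ i ∈ I, z i := by
  set N := Fintype.card ι with hN
  rcases k with _ | m
  · simp [Finset.powersetCard_zero]
  push_cast
  -- rewrite RHS sum via the helper
  have hS1 : ∑ I ∈ (Finset.univ : Finset ι).powersetCard (m+1),
      (∑ i ∈ I, z i) * ∏ i ∈ I, z i
      = ∑ K ∈ (Finset.univ : Finset ι).powersetCard m,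
          ∑ i ∈ Finset.univ \ K, z i ^ 2 * ∏ j ∈ K, z j := by
    rw [← sum_powersetCard_succ_erase (Finset.univ : Finset ι) m
      (fun K i => z i ^ 2 * ∏ j ∈ K, z j)]
    apply Finset.sum_congr rfl
    intro I _
    rw [Finset.sum_mul]
    apply Finset.sum_congr rfl
    intro i hi
    rw [← Finset.mul_prod_erase I z hi]
    ring
  have hS2 : ((m:ℝ)+1) * ∑ I ∈ (Finset.univ : Finset ι).powersetCard (m+1),
      (∑ i ∈ Finset.univ \ I, z i) * ∏ i ∈ I, z i
      = ∑ K ∈ (Finset.univ : Finset ι).powersetCard m,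
          ∑ j ∈ Finset.univ \ K,
            (∑ i ∈ Finset.univ \ insert j K, z i) * (z j * ∏ i ∈ K, z i) := by
    rw [← sum_powersetCard_succ_erase (Finset.univ : Finset ι) m
      (fun K j => (∑ i ∈ Finset.univ \ insert j K, z i) * (z j * ∏ i ∈ K, z i))]
    rw [Finset.mul_sum]
    apply Finset.sum_congr rfl
    intro I hI
    rw [Finset.mem_powersetCard] at hI
    have hcongr : ∀ j ∈ I,
        (∑ i ∈ Finset.univ \ insert j (I.erase j), z i) * (z j * ∏ i ∈ I.erase j, z i)
        = (∑ i ∈ Finset.univ \ I, z i) * ∏ i ∈ I, z i := by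
      intro j hj
      rw [Finset.insert_erase hj, Finset.mul_prod_erase I z hj]
    rw [Finset.sum_congr rfl hcongr, Finset.sum_const, hI.2]
    push_cast
    ring
  rw [hS1]
  -- reduce to a pointwise bound over K, then Cauchy-Schwarz
  have key : ∀ K ∈ (Finset.univ : Finset ι).powersetCard m,
      ∑ j ∈ Finset.univ \ K,
          (∑ i ∈ Finset.univ \ insert j K, z i) * (z j * ∏ i ∈ K, z i)
      ≤ ((N:ℝ) - (m+1)) * ∑ i ∈ Finset.univ \ K, z i ^ 2 * ∏ j ∈ K, z j := by
    intro K hK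
    rw [Finset.mem_powersetCard] at hK
    set O := (Finset.univ : Finset ι) \ K with hO
    have hcardO : (O.card : ℝ) = (N : ℝ) - m := by
      rw [hO, Finset.card_sdiff_of_subset (Finset.subset_univ K), hK.2, Finset.card_univ, ← hN]
      have : m ≤ N := hK.2 ▸ Finset.card_le_card (Finset.subset_univ K)
      push_cast [Nat.cast_sub this]
      ring
    have hprod : 0 ≤ ∏ j ∈ K, z j := Finset.prod_nonneg (fun i _ => hz i)
    have hCS : (∑ i ∈ O, z i) ^ 2 ≤ (O.card : ℝ) * ∑ i ∈ O, z i ^ 2 := by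
      exact_mod_cast sq_sum_le_card_mul_sum_sq (s := O) (f := z)
    have hpt : ∑ j ∈ O, (∑ i ∈ O, z i - z j) * z j
        ≤ ((N:ℝ) - (m+1)) * ∑ i ∈ O, z i ^ 2 := by
      have hexp : ∑ j ∈ O, (∑ i ∈ O, z i - z j) * z j
          = (∑ i ∈ O, z i) ^ 2 - ∑ i ∈ O, z i ^ 2 := by
        simp [sub_mul, Finset.sum_sub_distrib, ← Finset.mul_sum, sq]
      rw [hexp, hcardO] at *
      rw [hcardO] at hCS
      nlinarith [hCS]
    calc ∑ j ∈ O, (∑ i ∈ Finset.univ \ insert j K, z i) * (z j * ∏ i ∈ K, z i)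
        = (∑ j ∈ O, (∑ i ∈ O, z i - z j) * z j) * ∏ i ∈ K, z i := by
          rw [Finset.sum_mul]
          apply Finset.sum_congr rfl
          intro j hj
          rw [Finset.sdiff_insert, ← hO, Finset.sum_erase_eq_sub hj]
          ring
      _ ≤ (((N:ℝ) - (m+1)) * ∑ i ∈ O, z i ^ 2) * ∏ i ∈ K, z i :=
          mul_le_mul_of_nonneg_right hpt hprod
      _ = ((N:ℝ) - (m+1)) * ∑ i ∈ O, z i ^ 2 * ∏ j ∈ K, z j := by
          rw [mul_assoc, Finset.sum_mul]
  calc ((m:ℝ)+1) * ∑ I ∈ (Finset.univ : Finset ι).powersetCard (m+1),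
        (∑ i ∈ Finset.univ \ I, z i) * ∏ i ∈ I, z i
      = ∑ K ∈ (Finset.univ : Finset ι).powersetCard m,
          ∑ j ∈ Finset.univ \ K,
            (∑ i ∈ Finset.univ \ insert j K, z i) * (z j * ∏ i ∈ K, z i) := hS2
    _ ≤ ∑ K ∈ (Finset.univ : Finset ι).powersetCard m,
          ((N:ℝ) - (m+1)) * ∑ i ∈ Finset.univ \ K, z i ^ 2 * ∏ j ∈ K, z j :=
        Finset.sum_le_sum key
    _ = ((N:ℝ) - (m+1)) * ∑ K ∈ (Finset.univ : Finset ι).powersetCard m,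
          ∑ i ∈ Finset.univ \ K, z i ^ 2 * ∏ j ∈ K, z j := by
        rw [Finset.mul_sum]


lemma esum_succ_eq (z : ι → ℝ) (n : ℕ) :
    ((n:ℝ)+1) * esum z (n+1)
      = ∑ K ∈ (Finset.univ : Finset ι).powersetCard n,
          (∑ i ∈ Finset.univ \ K, z i) * ∏ i ∈ K, z i := by
  have h1 : ∀ I ∈ (Finset.univ : Finset ι).powersetCard (n+1),
      ((n:ℝ)+1) * ∏ i ∈ I, z i = ∑ i ∈ I, z i * ∏ j ∈ I.erase i, z j := by
    intro I hI
    rw [Finset.mem_powersetCard] at hI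
    have : ∀ i ∈ I, z i * ∏ j ∈ I.erase i, z j = ∏ j ∈ I, z j :=
      fun i hi => Finset.mul_prod_erase I z hi
    rw [Finset.sum_congr rfl this, Finset.sum_const, hI.2]
    push_cast
    ring
  rw [esum, Finset.mul_sum, Finset.sum_congr rfl h1,
    sum_powersetCard_succ_erase (Finset.univ : Finset ι) n
      (fun K i => z i * ∏ j ∈ K, z j)]
  apply Finset.sum_congr rfl
  intro K _
  rw [Finset.sum_mul]

/-- Maclaurin-type bound: the `n`-th elementary symmetric mean is at most the
`n`-th power of the arithmetic mean. -/
lemma esum_le (z : ι → ℝ) (hz : ∀ i, 0 ≤ z i) (hN : 0 < Fintype.card ι) (n : ℕ) :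
    esum z n ≤ (Nat.choose (Fintype.card ι) n : ℝ) *
      ((∑ i, z i) / (Fintype.card ι : ℝ)) ^ n := by
  set N := Fintype.card ι with hNdef
  have hT : 0 ≤ ∑ i, z i := Finset.sum_nonneg (fun i _ => hz i)
  have hμ : 0 ≤ (∑ i, z i) / (N : ℝ) := by positivity
  induction n with
  | zero => simp [esum]
  | succ n ih =>
    by_cases hn : n < N
    · have h1 := esum_succ_eq z n
      have h2 := claim1 z hz n
      have h3 : (∑ I ∈ (Finset.univ : Finset ι).powersetCard n,
            (∑ i ∈ Finset.univ \ I, z i) * ∏ i ∈ I, z i)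
          + (∑ I ∈ (Finset.univ : Finset ι).powersetCard n,
            (∑ i ∈ I, z i) * ∏ i ∈ I, z i)
          = (∑ i, z i) * esum z n := by
        rw [← Finset.sum_add_distrib, esum, Finset.mul_sum]
        apply Finset.sum_congr rfl
        intro I hI
        rw [Finset.mem_powersetCard] at hI
        rw [← add_mul, Finset.sum_sdiff hI.1]
      -- from h2, h3: N * S2 ≤ (N - n) * T * esum n
      set S2 := ∑ I ∈ (Finset.univ : Finset ι).powersetCard n,
        (∑ i ∈ Finset.univ \ I, z i) * ∏ i ∈ I, z i with hS2def
      set S1 := ∑ I ∈ (Finset.univ : Finset ι).powersetCard n,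
        (∑ i ∈ I, z i) * ∏ i ∈ I, z i with hS1def
      have hNS2 : (N : ℝ) * S2 ≤ ((N:ℝ) - n) * ((∑ i, z i) * esum z n) := by
        nlinarith [h2, h3]
      have hEn1 : ((n:ℝ)+1) * esum z (n+1) = S2 := h1
      have hNpos : (0:ℝ) < N := by exact_mod_cast hN
      have hchoose : ((n:ℝ)+1) * (Nat.choose N (n+1) : ℝ)
          = ((N:ℝ) - n) * (Nat.choose N n : ℝ) := by
        have h := congrArg (Nat.cast (R := ℝ)) (Nat.choose_succ_right_eq N n)
        push_cast [Nat.cast_sub (le_of_lt hn)] at h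
        linarith [h]
      have hEn : esum z n ≤ (Nat.choose N n : ℝ) * ((∑ i, z i) / (N : ℝ)) ^ n := ih
      have hNn : (0:ℝ) ≤ (N:ℝ) - n := by
        have : (n:ℝ) < N := by exact_mod_cast hn
        linarith
      have hcoef : (0:ℝ) ≤ ((N:ℝ) - n) * (∑ i, z i) := mul_nonneg hNn hT
      have key2 : (0:ℝ) ≤ (((N:ℝ) - n) * (∑ i, z i)) *
          ((Nat.choose N n : ℝ) * ((∑ i, z i) / (N : ℝ)) ^ n - esum z n) :=
        mul_nonneg hcoef (sub_nonneg.2 hEn)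
      have step1 : (N:ℝ) * (((n:ℝ)+1) * esum z (n+1))
          ≤ (((N:ℝ) - n) * (∑ i, z i)) *
            ((Nat.choose N n : ℝ) * ((∑ i, z i) / (N : ℝ)) ^ n) := by
        nlinarith [hNS2, key2, hEn1]
      have hμT : (∑ i, z i) = (N:ℝ) * ((∑ i, z i) / (N : ℝ)) := by
        field_simp
      have step2 : ((N:ℝ) * ((n:ℝ)+1)) * esum z (n+1)
          ≤ ((N:ℝ) * ((n:ℝ)+1)) *
            ((Nat.choose N (n+1) : ℝ) * ((∑ i, z i) / (N : ℝ)) ^ (n+1)) := by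
        have heq : (((N:ℝ) - n) * (∑ i, z i)) *
            ((Nat.choose N n : ℝ) * ((∑ i, z i) / (N : ℝ)) ^ n)
            = ((N:ℝ) * ((n:ℝ)+1)) *
              ((Nat.choose N (n+1) : ℝ) * ((∑ i, z i) / (N : ℝ)) ^ (n+1)) := by
          linear_combination (((N:ℝ) - n) * (Nat.choose N n : ℝ) *
              ((∑ i, z i) / (N : ℝ)) ^ n) * hμT
            + ((N:ℝ) * ((∑ i, z i) / (N : ℝ)) ^ (n+1)) * hchoose.symm
        calc ((N:ℝ) * ((n:ℝ)+1)) * esum z (n+1)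
            = (N:ℝ) * (((n:ℝ)+1) * esum z (n+1)) := by ring
          _ ≤ (((N:ℝ) - n) * (∑ i, z i)) *
              ((Nat.choose N n : ℝ) * ((∑ i, z i) / (N : ℝ)) ^ n) := step1
          _ = _ := heq
      have hpos : (0:ℝ) < (N:ℝ) * ((n:ℝ)+1) := by positivity
      exact le_of_mul_le_mul_left step2 hpos
    · push_neg at hn
      have hempty : (Finset.univ : Finset ι).powersetCard (n+1) = ∅ := by
        apply Finset.powersetCard_eq_empty.2
        rw [Finset.card_univ]
        omega
      rw [esum, hempty]
      simp
      positivity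

lemma chernoff_one_sided {N : ℕ} (hN : 0 < N) (n : ℕ) (hn : 0 < n)
    (x : Fin N → ℝ) (M : ℝ) (hM : 0 < M) (hx : ∀ i, 0 ≤ x i ∧ x i ≤ M)
    (ε : ℝ) (hε : 0 < ε) :
    (((((Finset.univ : Finset (Fin N)).powersetCard n).filter
        (fun I => (1/(N:ℝ)) * ∑ i, x i + ε ≤ (1/(n:ℝ)) * ∑ i ∈ I, x i)).card : ℝ)
      ≤ (Nat.choose N n : ℝ) * Real.exp (-(2 * n * ε^2 / M^2))) := by
  classical
  set μ := (1/(N:ℝ)) * ∑ i, x i with hμdef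
  set lam := 4 * ε / M^2 with hlam
  have hlam0 : 0 < lam := by positivity
  set P := (Finset.univ : Finset (Fin N)).powersetCard n with hP
  set bad := P.filter (fun I => μ + ε ≤ (1/(n:ℝ)) * ∑ i ∈ I, x i) with hbad
  set z : Fin N → ℝ := fun i => Real.exp (lam * x i) with hz
  have hz0 : ∀ i, 0 ≤ z i := fun i => (Real.exp_pos _).le
  -- step 1
  have step1 : (bad.card : ℝ) * Real.exp (lam * (n * (μ + ε)))
      ≤ ∑ I ∈ P, ∏ i ∈ I, z i := by
    calc (bad.card : ℝ) * Real.exp (lam * (n * (μ + ε)))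
        = ∑ _I ∈ bad, Real.exp (lam * (n * (μ + ε))) := by
          rw [Finset.sum_const, nsmul_eq_mul]
      _ ≤ ∑ I ∈ bad, ∏ i ∈ I, z i := by
          apply Finset.sum_le_sum
          intro I hI
          rw [hbad, Finset.mem_filter] at hI
          have h1 : n * (μ + ε) ≤ ∑ i ∈ I, x i := by
            have hn0 : (0:ℝ) < n := by exact_mod_cast hn
            have := hI.2
            calc (n:ℝ) * (μ + ε) ≤ (n:ℝ) * ((1/(n:ℝ)) * ∑ i ∈ I, x i) := by
                  exact mul_le_mul_of_nonneg_left this (le_of_lt hn0)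
              _ = ∑ i ∈ I, x i := by field_simp
          have : lam * (n * (μ + ε)) ≤ lam * ∑ i ∈ I, x i :=
            mul_le_mul_of_nonneg_left h1 hlam0.le
          calc Real.exp (lam * (n * (μ + ε))) ≤ Real.exp (lam * ∑ i ∈ I, x i) :=
                Real.exp_le_exp.2 this
            _ = ∏ i ∈ I, z i := by
                rw [Finset.mul_sum, Real.exp_sum]
      _ ≤ ∑ I ∈ P, ∏ i ∈ I, z i := by
          apply Finset.sum_le_sum_of_subset_of_nonneg (Finset.filter_subset _ _)
          intro I _ _
          exact Finset.prod_nonneg (fun i _ => hz0 i)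
  -- step 2: esum bound
  have hcard : Fintype.card (Fin N) = N := Fintype.card_fin N
  have step2 : ∑ I ∈ P, ∏ i ∈ I, z i
      ≤ (Nat.choose N n : ℝ) * ((∑ i, z i) / (N : ℝ)) ^ n := by
    have := esum_le z hz0 (by rw [hcard]; exact hN) n
    rw [hcard] at this
    exact this
  -- step 3: mean of z bound
  have hμ0 : 0 ≤ μ := by
    rw [hμdef]
    apply mul_nonneg (by positivity)
    exact Finset.sum_nonneg (fun i _ => (hx i).1)
  have hμM : μ ≤ M := by
    rw [hμdef]
    have : ∑ i, x i ≤ ∑ _i : Fin N, M := Finset.sum_le_sum (fun i _ => (hx i).2)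
    rw [Finset.sum_const, Finset.card_univ, hcard, nsmul_eq_mul] at this
    calc (1/(N:ℝ)) * ∑ i, x i ≤ (1/(N:ℝ)) * ((N:ℝ) * M) :=
          mul_le_mul_of_nonneg_left this (by positivity)
      _ = M := by field_simp
  set p := μ / M with hp
  have hp0 : 0 ≤ p := div_nonneg hμ0 hM.le
  have hp1 : p ≤ 1 := by rw [hp]; exact div_le_one_of_le₀ hμM hM.le
  have step3 : (∑ i, z i) / (N : ℝ) ≤ Real.exp (lam * μ + lam^2 * M^2 / 8) := by
    have hchord : ∀ i, z i ≤ 1 - x i / M + (x i / M) * Real.exp (lam * M) := by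
      intro i
      have hs0 : 0 ≤ x i / M := div_nonneg (hx i).1 hM.le
      have hs1 : x i / M ≤ 1 := div_le_one_of_le₀ (hx i).2 hM.le
      have := convexOn_exp.2 (Set.mem_univ (0:ℝ)) (Set.mem_univ (lam * M))
        (by linarith : (0:ℝ) ≤ 1 - x i / M) hs0 (by ring)
      simp only [smul_eq_mul, mul_zero, zero_add, Real.exp_zero, mul_one] at this
      have harg : x i / M * (lam * M) = lam * x i := by field_simp
      rw [harg] at this
      exact this
    have hsum : ∑ i, z i ≤ ∑ i, (1 - x i / M + (x i / M) * Real.exp (lam * M)) :=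
      Finset.sum_le_sum (fun i _ => hchord i)
    have hsum2 : (∑ i, z i) / (N:ℝ) ≤ 1 - p + p * Real.exp (lam * M) := by
      have hexp : ∑ i, (1 - x i / M + (x i / M) * Real.exp (lam * M))
          = (N:ℝ) - (∑ i, x i) / M + ((∑ i, x i) / M) * Real.exp (lam * M) := by
        rw [Finset.sum_add_distrib, Finset.sum_sub_distrib, Finset.sum_const,
          Finset.card_univ, hcard, nsmul_eq_mul, mul_one, ← Finset.sum_div,
          ← Finset.sum_mul, ← Finset.sum_div]
      rw [div_le_iff₀ (by positivity : (0:ℝ) < (N:ℝ))]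
      calc ∑ i, z i ≤ (N:ℝ) - (∑ i, x i) / M + ((∑ i, x i) / M) * Real.exp (lam * M) := by
            rw [← hexp]; exact hsum
        _ = (1 - p + p * Real.exp (lam * M)) * (N:ℝ) := by
            rw [hp, hμdef]
            have hNne : ((N:ℝ)) ≠ 0 := by positivity
            field_simp
    have hbern := bernoulli_mgf_bound p (lam * M) hp0 hp1 (by positivity)
    calc (∑ i, z i) / (N:ℝ) ≤ 1 - p + p * Real.exp (lam * M) := hsum2
      _ ≤ Real.exp (p * (lam * M) + (lam * M)^2 / 8) := hbern
      _ = Real.exp (lam * μ + lam^2 * M^2 / 8) := by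
          congr 1
          rw [hp]
          field_simp
  -- combine
  have hz' : 0 ≤ (∑ i, z i) / (N : ℝ) := by positivity
  have step4 : ((∑ i, z i) / (N : ℝ)) ^ n ≤ Real.exp (n * (lam * μ + lam^2 * M^2 / 8)) := by
    calc ((∑ i, z i) / (N : ℝ)) ^ n ≤ (Real.exp (lam * μ + lam^2 * M^2 / 8)) ^ n :=
          pow_le_pow_left₀ hz' step3 n
      _ = Real.exp (n * (lam * μ + lam^2 * M^2 / 8)) := by
          rw [← Real.exp_nat_mul]
  have hfinal : (bad.card : ℝ) * Real.exp (lam * (n * (μ + ε)))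
      ≤ (Nat.choose N n : ℝ) * Real.exp (n * (lam * μ + lam^2 * M^2 / 8)) := by
    calc (bad.card : ℝ) * Real.exp (lam * (n * (μ + ε))) ≤ ∑ I ∈ P, ∏ i ∈ I, z i := step1
      _ ≤ (Nat.choose N n : ℝ) * ((∑ i, z i) / (N : ℝ)) ^ n := step2
      _ ≤ (Nat.choose N n : ℝ) * Real.exp (n * (lam * μ + lam^2 * M^2 / 8)) :=
          mul_le_mul_of_nonneg_left step4 (by positivity)
  have hEpos : (0:ℝ) < Real.exp (lam * (n * (μ + ε))) := Real.exp_pos _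
  have : (bad.card : ℝ) ≤ (Nat.choose N n : ℝ) *
      Real.exp (n * (lam * μ + lam^2 * M^2 / 8)) / Real.exp (lam * (n * (μ + ε))) := by
    rw [le_div_iff₀ hEpos]
    exact hfinal
  calc (bad.card : ℝ) ≤ (Nat.choose N n : ℝ) *
        Real.exp (n * (lam * μ + lam^2 * M^2 / 8)) / Real.exp (lam * (n * (μ + ε))) := this
    _ = (Nat.choose N n : ℝ) * Real.exp (-(2 * n * ε^2 / M^2)) := by
        rw [mul_div_assoc, ← Real.exp_sub]
        congr 2
        rw [hlam]
        field_simp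
        ring

lemma chernoff_two_sided {N : ℕ} (hN : 0 < N) (n : ℕ) (hn : 0 < n)
    (x : Fin N → ℝ) (M : ℝ) (hM : 0 < M) (hx : ∀ i, 0 ≤ x i ∧ x i ≤ M)
    (ε : ℝ) (hε : 0 < ε) :
    (((((Finset.univ : Finset (Fin N)).powersetCard n).filter
        (fun I => ¬ (|(1/(n:ℝ)) * ∑ i ∈ I, x i - (1/(N:ℝ)) * ∑ i, x i| ≤ ε))).card : ℝ)
      ≤ 2 * ((Nat.choose N n : ℝ) * Real.exp (-(2 * n * ε^2 / M^2)))) := by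
  classical
  set P := (Finset.univ : Finset (Fin N)).powersetCard n with hP
  set x' : Fin N → ℝ := fun i => M - x i with hx'
  have hx'mem : ∀ i, 0 ≤ x' i ∧ x' i ≤ M := by
    intro i
    constructor
    · simp only [hx']; linarith [(hx i).2]
    · simp only [hx']; linarith [(hx i).1]
  have hsub : P.filter
        (fun I => ¬ (|(1/(n:ℝ)) * ∑ i ∈ I, x i - (1/(N:ℝ)) * ∑ i, x i| ≤ ε))
      ⊆ (P.filter (fun I => (1/(N:ℝ)) * ∑ i, x i + ε ≤ (1/(n:ℝ)) * ∑ i ∈ I, x i))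
        ∪ (P.filter (fun I => (1/(N:ℝ)) * ∑ i, x' i + ε ≤ (1/(n:ℝ)) * ∑ i ∈ I, x' i)) := by
    intro I hI
    rw [Finset.mem_filter] at hI
    obtain ⟨hIP, habs⟩ := hI
    rw [Finset.mem_union, Finset.mem_filter, Finset.mem_filter]
    rw [not_le] at habs
    have hcardI : (I.card : ℝ) = n := by
      rw [(Finset.mem_powersetCard.1 hIP).2]
    have hn0 : (0:ℝ) < n := by exact_mod_cast hn
    have hN0 : (0:ℝ) < N := by exact_mod_cast hN
    rcases lt_abs.1 habs with h | h
    · left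
      exact ⟨hIP, by linarith⟩
    · right
      refine ⟨hIP, ?_⟩
      have hsx' : ∑ i ∈ I, x' i = I.card * M - ∑ i ∈ I, x i := by
        simp only [hx', Finset.sum_sub_distrib, Finset.sum_const, nsmul_eq_mul]
      have hsx'' : ∑ i, x' i = N * M - ∑ i, x i := by
        simp only [hx', Finset.sum_sub_distrib, Finset.sum_const, Finset.card_univ,
          Fintype.card_fin, nsmul_eq_mul]
      rw [hsx', hsx'', hcardI]
      have h' : (1/(n:ℝ)) * ∑ i ∈ I, x i < (1/(N:ℝ)) * ∑ i, x i - ε := by linarith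
      have e1 : (1/(n:ℝ)) * ((n:ℝ) * M - ∑ i ∈ I, x i) = M - (1/(n:ℝ)) * ∑ i ∈ I, x i := by
        field_simp
      have e2 : (1/(N:ℝ)) * ((N:ℝ) * M - ∑ i, x i) = M - (1/(N:ℝ)) * ∑ i, x i := by
        field_simp
      rw [e1, e2]
      linarith
  have hcard := Finset.card_le_card hsub
  have hun := Finset.card_union_le
    (P.filter (fun I => (1/(N:ℝ)) * ∑ i, x i + ε ≤ (1/(n:ℝ)) * ∑ i ∈ I, x i))
    (P.filter (fun I => (1/(N:ℝ)) * ∑ i, x' i + ε ≤ (1/(n:ℝ)) * ∑ i ∈ I, x' i))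
  have b1 := chernoff_one_sided hN n hn x M hM hx ε hε
  have b2 := chernoff_one_sided hN n hn x' M hM hx'mem ε hε
  have hchain : (((P.filter
      (fun I => ¬ (|(1/(n:ℝ)) * ∑ i ∈ I, x i - (1/(N:ℝ)) * ∑ i, x i| ≤ ε))).card : ℝ))
      ≤ ((P.filter (fun I => (1/(N:ℝ)) * ∑ i, x i + ε ≤ (1/(n:ℝ)) * ∑ i ∈ I, x i)).card : ℝ)
        + ((P.filter (fun I => (1/(N:ℝ)) * ∑ i, x' i + ε ≤ (1/(n:ℝ)) * ∑ i ∈ I, x' i)).card : ℝ) := by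
    have := le_trans hcard hun
    exact_mod_cast this
  linarith [b1, b2, hchain]


lemma sandwich (t t' μA μB νA νB νAB μa μb νa νb νab : ℝ)
    (hμA0 : 0 ≤ μA) (hμB0 : 0 ≤ μB) (hvA : 0 < νA - μA ^ 2) (hvB : 0 < νB - μB ^ 2)
    (h1 : |μa - μA| ≤ t) (h2 : |μb - μB| ≤ t) (h3 : |νa - νA| ≤ t')
    (h4 : |νb - νB| ≤ t') (h5 : |νab - νAB| ≤ t')
    (hden : 0 < Real.sqrt (max 0 (νa - t' - (μa + t) ^ 2) * max 0 (νb - t' - (μb + t) ^ 2))) :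
    ((if 0 ≤ νab - t' - (μa + t) * (μb + t)
      then (νab - t' - (μa + t) * (μb + t)) /
        Real.sqrt (max 0 (νa + t' - (max 0 (μa - t)) ^ 2) *
          max 0 (νb + t' - (max 0 (μb - t)) ^ 2))
      else (νab - t' - (μa + t) * (μb + t)) /
        Real.sqrt (max 0 (νa - t' - (μa + t) ^ 2) * max 0 (νb - t' - (μb + t) ^ 2)))
      ≤ (νAB - μA * μB) / (Real.sqrt (νA - μA ^ 2) * Real.sqrt (νB - μB ^ 2)))
    ∧ ((νAB - μA * μB) / (Real.sqrt (νA - μA ^ 2) * Real.sqrt (νB - μB ^ 2))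
      ≤ (if 0 ≤ νab + t' - (max 0 (μa - t)) * (max 0 (μb - t))
      then (νab + t' - (max 0 (μa - t)) * (max 0 (μb - t))) /
        Real.sqrt (max 0 (νa - t' - (μa + t) ^ 2) * max 0 (νb - t' - (μb + t) ^ 2))
      else (νab + t' - (max 0 (μa - t)) * (max 0 (μb - t))) /
        Real.sqrt (max 0 (νa + t' - (max 0 (μa - t)) ^ 2) *
          max 0 (νb + t' - (max 0 (μb - t)) ^ 2)))) := by
  obtain ⟨h1l, h1r⟩ := abs_le.1 h1
  obtain ⟨h2l, h2r⟩ := abs_le.1 h2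
  obtain ⟨h3l, h3r⟩ := abs_le.1 h3
  obtain ⟨h4l, h4r⟩ := abs_le.1 h4
  obtain ⟨h5l, h5r⟩ := abs_le.1 h5
  set num := νAB - μA * μB with hnum
  set numLow := νab - t' - (μa + t) * (μb + t) with hnumLow
  set numHigh := νab + t' - (max 0 (μa - t)) * (max 0 (μb - t)) with hnumHigh
  set den := Real.sqrt (νA - μA ^ 2) * Real.sqrt (νB - μB ^ 2) with hdenD
  set denLow := Real.sqrt (max 0 (νa - t' - (μa + t) ^ 2) *
    max 0 (νb - t' - (μb + t) ^ 2)) with hdenLow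
  set denHigh := Real.sqrt (max 0 (νa + t' - (max 0 (μa - t)) ^ 2) *
    max 0 (νb + t' - (max 0 (μb - t)) ^ 2)) with hdenHigh
  -- basic mean bounds
  have hAhigh : μA ≤ μa + t := by linarith
  have hBhigh : μB ≤ μb + t := by linarith
  have hAlow : max 0 (μa - t) ≤ μA := max_le hμA0 (by linarith)
  have hBlow : max 0 (μb - t) ≤ μB := max_le hμB0 (by linarith)
  have hμAh0 : 0 ≤ μa + t := le_trans hμA0 hAhigh
  have hμBh0 : 0 ≤ μb + t := le_trans hμB0 hBhigh
  -- variance bounds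
  have hvarAlow : max 0 (νa - t' - (μa + t) ^ 2) ≤ νA - μA ^ 2 := by
    apply max_le hvA.le
    have : μA ^ 2 ≤ (μa + t) ^ 2 := pow_le_pow_left₀ hμA0 hAhigh 2
    linarith
  have hvarBlow : max 0 (νb - t' - (μb + t) ^ 2) ≤ νB - μB ^ 2 := by
    apply max_le hvB.le
    have : μB ^ 2 ≤ (μb + t) ^ 2 := pow_le_pow_left₀ hμB0 hBhigh 2
    linarith
  have hvarAhigh : νA - μA ^ 2 ≤ max 0 (νa + t' - (max 0 (μa - t)) ^ 2) := by
    refine le_trans ?_ (le_max_right _ _)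
    have : (max 0 (μa - t)) ^ 2 ≤ μA ^ 2 := pow_le_pow_left₀ (le_max_left _ _) hAlow 2
    linarith
  have hvarBhigh : νB - μB ^ 2 ≤ max 0 (νb + t' - (max 0 (μb - t)) ^ 2) := by
    refine le_trans ?_ (le_max_right _ _)
    have : (max 0 (μb - t)) ^ 2 ≤ μB ^ 2 := pow_le_pow_left₀ (le_max_left _ _) hBlow 2
    linarith
  -- den bounds
  have hdeneq : den = Real.sqrt ((νA - μA ^ 2) * (νB - μB ^ 2)) :=
    (Real.sqrt_mul hvA.le _).symm
  have hdenpos : 0 < den := mul_pos (Real.sqrt_pos.2 hvA) (Real.sqrt_pos.2 hvB)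
  have hdlle : denLow ≤ den := by
    rw [hdeneq]
    apply Real.sqrt_le_sqrt
    exact mul_le_mul hvarAlow hvarBlow (le_max_left _ _) hvA.le
  have hdhge : den ≤ denHigh := by
    rw [hdeneq]
    apply Real.sqrt_le_sqrt
    exact mul_le_mul hvarAhigh hvarBhigh hvB.le (le_max_left _ _)
  have hdl0 : 0 < denLow := hden
  have hdh0 : 0 < denHigh := lt_of_lt_of_le hdenpos hdhge
  -- numerator bounds
  have hnumLowle : numLow ≤ num := by
    have : μA * μB ≤ (μa + t) * (μb + t) := mul_le_mul hAhigh hBhigh hμB0 hμAh0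
    rw [hnumLow, hnum]
    linarith
  have hnumHighge : num ≤ numHigh := by
    have : (max 0 (μa - t)) * (max 0 (μb - t)) ≤ μA * μB :=
      mul_le_mul hAlow hBlow (le_max_left _ _) hμA0
    rw [hnumHigh, hnum]
    linarith
  clear_value num numLow numHigh den denLow denHigh
  clear h1 h2 h3 h4 h5 h1l h1r h2l h2r h3l h3r h4l h4r h5l h5r hAhigh hBhigh hAlow hBlow
    hμAh0 hμBh0 hvarAlow hvarBlow hvarAhigh hvarBhigh hdeneq hnum hnumLow hnumHigh hdenD
    hdenLow hdenHigh hden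
  constructor
  · -- lower bound
    split_ifs with hc
    · -- 0 ≤ numLow : numLow / denHigh ≤ num / den
      rw [div_le_div_iff₀ hdh0 hdenpos]
      have p1 : numLow * den ≤ num * den := mul_le_mul_of_nonneg_right hnumLowle hdenpos.le
      have p2 : num * den ≤ num * denHigh :=
        mul_le_mul_of_nonneg_left hdhge (le_trans hc hnumLowle)
      linarith
    · -- numLow < 0 : numLow / denLow ≤ num / den
      push_neg at hc
      rcases le_or_gt 0 num with hnn | hnn
      · have hL : numLow / denLow ≤ 0 :=
          div_nonpos_of_nonpos_of_nonneg hc.le hdl0.le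
        have hR : 0 ≤ num / den := div_nonneg hnn hdenpos.le
        linarith
      · rw [div_le_div_iff₀ hdl0 hdenpos]
        have p1 : numLow * den ≤ num * den := mul_le_mul_of_nonneg_right hnumLowle hdenpos.le
        have p2 : num * den ≤ num * denLow := mul_le_mul_of_nonpos_left hdlle hnn.le
        linarith
  · -- upper bound
    split_ifs with hc
    · -- 0 ≤ numHigh : num / den ≤ numHigh / denLow
      rcases le_or_gt 0 num with hnn | hnn
      · rw [div_le_div_iff₀ hdenpos hdl0]
        have p1 : num * denLow ≤ num * den := mul_le_mul_of_nonneg_left hdlle hnn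
        have p2 : num * den ≤ numHigh * den := mul_le_mul_of_nonneg_right hnumHighge hdenpos.le
        linarith
      · have hL : num / den ≤ 0 := div_nonpos_of_nonpos_of_nonneg hnn.le hdenpos.le
        have hR : 0 ≤ numHigh / denLow := div_nonneg hc hdl0.le
        linarith
    · -- numHigh < 0 : num / den ≤ numHigh / denHigh
      push_neg at hc
      rw [div_le_div_iff₀ hdenpos hdh0]
      have p1 : num * denHigh ≤ numHigh * denHigh :=
        mul_le_mul_of_nonneg_right hnumHighge hdh0.le
      have p2 : numHigh * denHigh ≤ numHigh * den := mul_le_mul_of_nonpos_left hdhge hc.le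
      linarith


set_option maxHeartbeats 2000000 in
/-- The paper's distribution-free confidence interval for Pearson's correlation from
a without-replacement subsample: with population parameters `μ_A, μ_B, ν_A, ν_B,
ν_{A,B}` of columns `A, B ∈ [0, C]^N` with positive variances and population
correlation `ρ`, sample `n` pairs uniformly at random without replacement, form the
sample parameters and the random bounds `μ^low = max(0, μ̂ − t)`, `μ^high = μ̂ + t`,
`ν^low = ν̂ − t'`, `ν^high = ν̂ + t'` with `t = √(ln(10/α)·C²/(2n))`,
`t' = √(ln(10/α)·C⁴/(2n))`, and set `num`/`den`/`ρ^low`/`ρ^high` by the paper's case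
analysis.  Then with probability at least `1 − α`: if `den_low > 0` then
`ρ^low ≤ ρ ≤ ρ^high`. -/
theorem correlation_confidence_interval (N n : ℕ) (hn : 0 < n) (hnN : n ≤ N)
    (A B : Fin N → ℝ) (C : ℝ) (hC : 0 < C)
    (hA : ∀ i, 0 ≤ A i ∧ A i ≤ C) (hB : ∀ i, 0 ≤ B i ∧ B i ≤ C)
    (α : ℝ) (hα : 0 < α) (hα1 : α < 1)
    (hvarA : 0 < (1 / (N : ℝ)) * ∑ i, (A i) ^ 2 - ((1 / (N : ℝ)) * ∑ i, A i) ^ 2)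
    (hvarB : 0 < (1 / (N : ℝ)) * ∑ i, (B i) ^ 2 - ((1 / (N : ℝ)) * ∑ i, B i) ^ 2) :
    let μA := (1 / (N : ℝ)) * ∑ i, A i
    let μB := (1 / (N : ℝ)) * ∑ i, B i
    let νA := (1 / (N : ℝ)) * ∑ i, (A i) ^ 2
    let νB := (1 / (N : ℝ)) * ∑ i, (B i) ^ 2
    let νAB := (1 / (N : ℝ)) * ∑ i, A i * B i
    let ρ := (νAB - μA * μB) / (Real.sqrt (νA - μA ^ 2) * Real.sqrt (νB - μB ^ 2))
    let t := Real.sqrt (Real.log (10 / α) * C ^ 2 / (2 * n))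
    let t' := Real.sqrt (Real.log (10 / α) * C ^ 4 / (2 * n))
    (((Finset.powersetCard n (Finset.univ : Finset (Fin N))).filter
        (fun I =>
          let μa := (1 / (n : ℝ)) * ∑ i ∈ I, A i
          let μb := (1 / (n : ℝ)) * ∑ i ∈ I, B i
          let νa := (1 / (n : ℝ)) * ∑ i ∈ I, (A i) ^ 2
          let νb := (1 / (n : ℝ)) * ∑ i ∈ I, (B i) ^ 2
          let νab := (1 / (n : ℝ)) * ∑ i ∈ I, A i * B i
          let μAlow := max 0 (μa - t)
          let μAhigh := μa + t
          let μBlow := max 0 (μb - t)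
          let μBhigh := μb + t
          let νAlow := νa - t'
          let νAhigh := νa + t'
          let νBlow := νb - t'
          let νBhigh := νb + t'
          let νABlow := νab - t'
          let νABhigh := νab + t'
          let numLow := νABlow - μAhigh * μBhigh
          let numHigh := νABhigh - μAlow * μBlow
          let denLow :=
            Real.sqrt (max 0 (νAlow - μAhigh ^ 2) * max 0 (νBlow - μBhigh ^ 2))
          let denHigh :=
            Real.sqrt (max 0 (νAhigh - μAlow ^ 2) * max 0 (νBhigh - μBlow ^ 2))
          let ρlow := if 0 ≤ numLow then numLow / denHigh else numLow / denLow
          let ρhigh := if 0 ≤ numHigh then numHigh / denLow else numHigh / denHigh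
          0 < denLow → ρlow ≤ ρ ∧ ρ ≤ ρhigh)).card : ℝ)
      / ((Finset.powersetCard n (Finset.univ : Finset (Fin N))).card : ℝ)
    ≥ 1 - α := by
  intro μA μB νA νB νAB ρ t t'
  set P := Finset.powersetCard n (Finset.univ : Finset (Fin N)) with hP
  set Q : Finset (Fin N) → Prop := fun I =>
          let μa := (1 / (n : ℝ)) * ∑ i ∈ I, A i
          let μb := (1 / (n : ℝ)) * ∑ i ∈ I, B i
          let νa := (1 / (n : ℝ)) * ∑ i ∈ I, (A i) ^ 2
          let νb := (1 / (n : ℝ)) * ∑ i ∈ I, (B i) ^ 2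
          let νab := (1 / (n : ℝ)) * ∑ i ∈ I, A i * B i
          let μAlow := max 0 (μa - t)
          let μAhigh := μa + t
          let μBlow := max 0 (μb - t)
          let μBhigh := μb + t
          let νAlow := νa - t'
          let νAhigh := νa + t'
          let νBlow := νb - t'
          let νBhigh := νb + t'
          let νABlow := νab - t'
          let νABhigh := νab + t'
          let numLow := νABlow - μAhigh * μBhigh
          let numHigh := νABhigh - μAlow * μBlow
          let denLow :=
            Real.sqrt (max 0 (νAlow - μAhigh ^ 2) * max 0 (νBlow - μBhigh ^ 2))
          let denHigh :=
            Real.sqrt (max 0 (νAhigh - μAlow ^ 2) * max 0 (νBhigh - μBlow ^ 2))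
          let ρlow := if 0 ≤ numLow then numLow / denHigh else numLow / denLow
          let ρhigh := if 0 ≤ numHigh then numHigh / denLow else numHigh / denHigh
          0 < denLow → ρlow ≤ ρ ∧ ρ ≤ ρhigh
    with hQ
  have hN : 0 < N := lt_of_lt_of_le hn hnN
  have hn0 : (0:ℝ) < n := by exact_mod_cast hn
  have hN0 : (0:ℝ) < N := by exact_mod_cast hN
  have hTpos : 0 < P.card := by
    rw [hP, Finset.card_powersetCard, Finset.card_univ, Fintype.card_fin]
    exact Nat.choose_pos hnN
  have hTcard : P.card = N.choose n := by
    rw [hP, Finset.card_powersetCard, Finset.card_univ, Fintype.card_fin]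
  have hT0 : (0:ℝ) < (P.card : ℝ) := by exact_mod_cast hTpos
  have hlogpos : 0 < Real.log (10 / α) := by
    apply Real.log_pos
    rw [lt_div_iff₀ hα]
    linarith
  have ht : 0 < t := by
    apply Real.sqrt_pos.2
    positivity
  have ht' : 0 < t' := by
    apply Real.sqrt_pos.2
    positivity
  have htsq : t ^ 2 = Real.log (10 / α) * C ^ 2 / (2 * n) := by
    rw [sq]
    exact Real.mul_self_sqrt (by positivity)
  have ht'sq : t' ^ 2 = Real.log (10 / α) * C ^ 4 / (2 * n) := by
    rw [sq]
    exact Real.mul_self_sqrt (by positivity)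
  have hα10 : (0:ℝ) < 10 / α := by positivity
  have hexpt : Real.exp (-(2 * n * t ^ 2 / C ^ 2)) = α / 10 := by
    have harg : 2 * n * t ^ 2 / C ^ 2 = Real.log (10 / α) := by
      rw [htsq]
      field_simp
    rw [harg, Real.exp_neg, Real.exp_log hα10, inv_div]
  have hexpt' : Real.exp (-(2 * n * t' ^ 2 / (C ^ 2) ^ 2)) = α / 10 := by
    have harg : 2 * n * t' ^ 2 / (C ^ 2) ^ 2 = Real.log (10 / α) := by
      rw [ht'sq]
      have : (C ^ 2) ^ 2 = C ^ 4 := by ring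
      rw [this]
      field_simp
    rw [harg, Real.exp_neg, Real.exp_log hα10, inv_div]
  -- bounds on the five statistics
  have hxA : ∀ i, 0 ≤ A i ∧ A i ≤ C := hA
  have hxB : ∀ i, 0 ≤ B i ∧ B i ≤ C := hB
  have hxA2 : ∀ i, 0 ≤ A i ^ 2 ∧ A i ^ 2 ≤ C ^ 2 := by
    intro i
    exact ⟨sq_nonneg _, pow_le_pow_left₀ (hA i).1 (hA i).2 2⟩
  have hxB2 : ∀ i, 0 ≤ B i ^ 2 ∧ B i ^ 2 ≤ C ^ 2 := by
    intro i
    exact ⟨sq_nonneg _, pow_le_pow_left₀ (hB i).1 (hB i).2 2⟩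
  have hxAB : ∀ i, 0 ≤ A i * B i ∧ A i * B i ≤ C ^ 2 := by
    intro i
    constructor
    · exact mul_nonneg (hA i).1 (hB i).1
    · rw [sq]
      exact mul_le_mul (hA i).2 (hB i).2 (hB i).1 hC.le
  have hC2 : (0:ℝ) < C ^ 2 := by positivity
  -- the five bad sets
  set B1 := P.filter (fun I => ¬ (|(1/(n:ℝ)) * ∑ i ∈ I, A i - (1/(N:ℝ)) * ∑ i, A i| ≤ t))
    with hB1
  set B2 := P.filter (fun I => ¬ (|(1/(n:ℝ)) * ∑ i ∈ I, B i - (1/(N:ℝ)) * ∑ i, B i| ≤ t))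
    with hB2
  set B3 := P.filter (fun I =>
    ¬ (|(1/(n:ℝ)) * ∑ i ∈ I, A i ^ 2 - (1/(N:ℝ)) * ∑ i, A i ^ 2| ≤ t')) with hB3
  set B4 := P.filter (fun I =>
    ¬ (|(1/(n:ℝ)) * ∑ i ∈ I, B i ^ 2 - (1/(N:ℝ)) * ∑ i, B i ^ 2| ≤ t')) with hB4
  set B5 := P.filter (fun I =>
    ¬ (|(1/(n:ℝ)) * ∑ i ∈ I, A i * B i - (1/(N:ℝ)) * ∑ i, A i * B i| ≤ t')) with hB5
  have hb1 : (B1.card : ℝ) ≤ (P.card : ℝ) * (α / 5) := by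
    have := chernoff_two_sided hN n hn A C hC hxA t ht
    rw [hexpt] at this
    rw [hB1, hP]
    calc (((Finset.powersetCard n (Finset.univ : Finset (Fin N))).filter
        (fun I => ¬ (|(1/(n:ℝ)) * ∑ i ∈ I, A i - (1/(N:ℝ)) * ∑ i, A i| ≤ t))).card : ℝ)
        ≤ 2 * ((N.choose n : ℝ) * (α / 10)) := this
      _ = (P.card : ℝ) * (α / 5) := by
        rw [hTcard]
        ring
  have hb2 : (B2.card : ℝ) ≤ (P.card : ℝ) * (α / 5) := by
    have := chernoff_two_sided hN n hn B C hC hxB t ht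
    rw [hexpt] at this
    rw [hB2, hP]
    calc (((Finset.powersetCard n (Finset.univ : Finset (Fin N))).filter
        (fun I => ¬ (|(1/(n:ℝ)) * ∑ i ∈ I, B i - (1/(N:ℝ)) * ∑ i, B i| ≤ t))).card : ℝ)
        ≤ 2 * ((N.choose n : ℝ) * (α / 10)) := this
      _ = (P.card : ℝ) * (α / 5) := by
        rw [hTcard]
        ring
  have hb3 : (B3.card : ℝ) ≤ (P.card : ℝ) * (α / 5) := by
    have := chernoff_two_sided hN n hn (fun i => A i ^ 2) (C ^ 2) hC2 hxA2 t' ht'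
    rw [hexpt'] at this
    rw [hB3, hP]
    calc (((Finset.powersetCard n (Finset.univ : Finset (Fin N))).filter
        (fun I => ¬ (|(1/(n:ℝ)) * ∑ i ∈ I, A i ^ 2 - (1/(N:ℝ)) * ∑ i, A i ^ 2| ≤ t'))).card : ℝ)
        ≤ 2 * ((N.choose n : ℝ) * (α / 10)) := this
      _ = (P.card : ℝ) * (α / 5) := by
        rw [hTcard]
        ring
  have hb4 : (B4.card : ℝ) ≤ (P.card : ℝ) * (α / 5) := by
    have := chernoff_two_sided hN n hn (fun i => B i ^ 2) (C ^ 2) hC2 hxB2 t' ht'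
    rw [hexpt'] at this
    rw [hB4, hP]
    calc (((Finset.powersetCard n (Finset.univ : Finset (Fin N))).filter
        (fun I => ¬ (|(1/(n:ℝ)) * ∑ i ∈ I, B i ^ 2 - (1/(N:ℝ)) * ∑ i, B i ^ 2| ≤ t'))).card : ℝ)
        ≤ 2 * ((N.choose n : ℝ) * (α / 10)) := this
      _ = (P.card : ℝ) * (α / 5) := by
        rw [hTcard]
        ring
  have hb5 : (B5.card : ℝ) ≤ (P.card : ℝ) * (α / 5) := by
    have := chernoff_two_sided hN n hn (fun i => A i * B i) (C ^ 2) hC2 hxAB t' ht'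
    rw [hexpt'] at this
    rw [hB5, hP]
    calc (((Finset.powersetCard n (Finset.univ : Finset (Fin N))).filter
        (fun I => ¬ (|(1/(n:ℝ)) * ∑ i ∈ I, A i * B i - (1/(N:ℝ)) * ∑ i, A i * B i| ≤ t'))).card : ℝ)
        ≤ 2 * ((N.choose n : ℝ) * (α / 10)) := this
      _ = (P.card : ℝ) * (α / 5) := by
        rw [hTcard]
        ring
  -- good sets satisfy Q
  have hμA0 : 0 ≤ μA := by
    apply mul_nonneg (by positivity)
    exact Finset.sum_nonneg (fun i _ => (hA i).1)
  have hμB0 : 0 ≤ μB := by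
    apply mul_nonneg (by positivity)
    exact Finset.sum_nonneg (fun i _ => (hB i).1)
  have hQtrue : ∀ I, I ∈ P →
      (|(1/(n:ℝ)) * ∑ i ∈ I, A i - (1/(N:ℝ)) * ∑ i, A i| ≤ t) →
      (|(1/(n:ℝ)) * ∑ i ∈ I, B i - (1/(N:ℝ)) * ∑ i, B i| ≤ t) →
      (|(1/(n:ℝ)) * ∑ i ∈ I, A i ^ 2 - (1/(N:ℝ)) * ∑ i, A i ^ 2| ≤ t') →
      (|(1/(n:ℝ)) * ∑ i ∈ I, B i ^ 2 - (1/(N:ℝ)) * ∑ i, B i ^ 2| ≤ t') →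
      (|(1/(n:ℝ)) * ∑ i ∈ I, A i * B i - (1/(N:ℝ)) * ∑ i, A i * B i| ≤ t') → Q I := by
    intro I _ c1 c2 c3 c4 c5
    rw [hQ]
    intro hden
    exact sandwich t t' μA μB νA νB νAB
      ((1 / (n : ℝ)) * ∑ i ∈ I, A i) ((1 / (n : ℝ)) * ∑ i ∈ I, B i)
      ((1 / (n : ℝ)) * ∑ i ∈ I, A i ^ 2) ((1 / (n : ℝ)) * ∑ i ∈ I, B i ^ 2)
      ((1 / (n : ℝ)) * ∑ i ∈ I, A i * B i)
      hμA0 hμB0 hvarA hvarB c1 c2 c3 c4 c5 hden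
  -- union bound
  have hsub : P.filter (fun I => ¬ Q I) ⊆ ((((B1 ∪ B2) ∪ B3) ∪ B4) ∪ B5) := by
    intro I hI
    rw [Finset.mem_filter] at hI
    obtain ⟨hIP, hnQ⟩ := hI
    by_contra hu
    simp only [Finset.mem_union, not_or, hB1, hB2, hB3, hB4, hB5, Finset.mem_filter,
      not_and, not_not] at hu
    exact hnQ (hQtrue I hIP (hu.1.1.1.1 hIP) (hu.1.1.1.2 hIP) (hu.1.1.2 hIP)
      (hu.1.2 hIP) (hu.2 hIP))
  have hbadcard : ((P.filter (fun I => ¬ Q I)).card : ℝ) ≤ (P.card : ℝ) * α := by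
    have h1 : (P.filter (fun I => ¬ Q I)).card
        ≤ B1.card + B2.card + B3.card + B4.card + B5.card := by
      calc (P.filter (fun I => ¬ Q I)).card ≤ ((((B1 ∪ B2) ∪ B3) ∪ B4) ∪ B5).card :=
            Finset.card_le_card hsub
        _ ≤ (((B1 ∪ B2) ∪ B3) ∪ B4).card + B5.card := Finset.card_union_le _ _
        _ ≤ ((B1 ∪ B2) ∪ B3).card + B4.card + B5.card := by
            have := Finset.card_union_le (((B1 ∪ B2) ∪ B3)) B4
            omega
        _ ≤ (B1 ∪ B2).card + B3.card + B4.card + B5.card := by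
            have := Finset.card_union_le (B1 ∪ B2) B3
            omega
        _ ≤ B1.card + B2.card + B3.card + B4.card + B5.card := by
            have := Finset.card_union_le B1 B2
            omega
    have h2 : ((P.filter (fun I => ¬ Q I)).card : ℝ)
        ≤ (B1.card : ℝ) + B2.card + B3.card + B4.card + B5.card := by
      exact_mod_cast h1
    calc ((P.filter (fun I => ¬ Q I)).card : ℝ)
        ≤ (B1.card : ℝ) + B2.card + B3.card + B4.card + B5.card := h2
      _ ≤ (P.card : ℝ) * (α/5) + (P.card : ℝ) * (α/5) + (P.card : ℝ) * (α/5)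
          + (P.card : ℝ) * (α/5) + (P.card : ℝ) * (α/5) := by
          linarith [hb1, hb2, hb3, hb4, hb5]
      _ = (P.card : ℝ) * α := by ring
  have hsplit : (P.filter Q).card + (P.filter (fun I => ¬ Q I)).card = P.card :=
    Finset.card_filter_add_card_filter_not (fun I => Q I)
  have hgoodcard : ((P.filter Q).card : ℝ) ≥ (P.card : ℝ) * (1 - α) := by
    have : ((P.filter Q).card : ℝ) + ((P.filter (fun I => ¬ Q I)).card : ℝ) = (P.card : ℝ) := by
      exact_mod_cast hsplit
    linarith [hbadcard, this]
  rw [ge_iff_le, le_div_iff₀ hT0]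
  linarith [hgoodcard]
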